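/- (Powers of annihilation operators on the vectors ξ_{r,s}) Under the q-commutation hypotheses below, for all natural numbers r, s, m one has (c*)^m·ξ_{r,s} = ∑_{i+j=m, i,j≥0} ([r]_q!/[r-j]_q!)·([s]_q!/[s-i]_q!)·binom(m,i)_q·q^{(k+r-j)·i}·ξ_{r-j,s-i} and (c_r*)^m·ξ_{r,s} = ∑_{i+j=m, i,j≥0} ([r]_q!/[r-i]_q!)·([s]_q!/[s-j]_q!)·binom(m,i)_q·q^{(k+s-j)·i}·ξ_{r-i,s-j}, where any term whose index ξ_{a,b} would have a < 0 or b < 0 is interpreted as 0 (equivalently, in the first sum only terms with j ≤ r and i ≤ s contribute). -/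

import Mathlib

open ContinuousLinearMap

/-- The q-integer `[n]_q = (1 - q^n)/(1 - q)`. -/
noncomputable def qInt (q : ℝ) (n : ℕ) : ℝ := (1 - q ^ n) / (1 - q)

/-- The q-factorial `[n]_q! = [1]_q ⋯ [n]_q`, with `[0]_q! = 1`. -/
noncomputable def qFact (q : ℝ) : ℕ → ℝ
  | 0 => 1
  | n + 1 => qFact q n * qInt q (n + 1)

/-- The q-binomial coefficient `binom(n,m)_q`, with value `0` when `m > n`. -/
noncomputable def qBinom (q : ℝ) (n m : ℕ) : ℝ :=
  if m ≤ n then qFact q n / (qFact q m * qFact q (n - m)) else 0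
noncomputable def Cf (q : ℝ) (k r s m i : ℕ) : ℝ :=
  qFact q r / qFact q (r - (m - i)) * (qFact q s / qFact q (s - i)) *
    qBinom q m i * q ^ ((k + r - (m - i)) * i)

section Real
variable {q : ℝ} (hq₁ : -1 < q) (hq₂ : q < 1)

lemma qInt_zero : qInt q 0 = 0 := by simp [qInt]

include hq₁ hq₂ in
lemma qInt_succ_pos (n : ℕ) : 0 < qInt q (n + 1) := by
  have h : |q ^ (n+1)| < 1 := by
    rw [abs_pow]
    exact pow_lt_one₀ (abs_nonneg q) (abs_lt.mpr ⟨hq₁, hq₂⟩) (Nat.succ_ne_zero n)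
  have := abs_lt.mp h
  exact div_pos (by linarith [this.2]) (by linarith)

include hq₁ hq₂ in
lemma qFact_pos (n : ℕ) : 0 < qFact q n := by
  induction n with
  | zero => norm_num [qFact]
  | succ n ih => exact mul_pos ih (qInt_succ_pos hq₁ hq₂ n)

include hq₁ hq₂ in
lemma qFact_ne (n : ℕ) : qFact q n ≠ 0 := (qFact_pos hq₁ hq₂ n).ne'

include hq₁ hq₂ in
lemma qInt_succ_ne (n : ℕ) : qInt q (n + 1) ≠ 0 := (qInt_succ_pos hq₁ hq₂ n).ne'

lemma qFact_succ (n : ℕ) : qFact q (n+1) = qFact q n * qInt q (n+1) := rfl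

include hq₂ in
lemma qInt_add (a b : ℕ) : qInt q (a + b) = qInt q a + q ^ a * qInt q b := by
  have h : (1:ℝ) - q ≠ 0 := by intro h; apply absurd hq₂; simp; nlinarith
  unfold qInt
  field_simp
  ring

lemma qBinom_eq {n i : ℕ} (h : i ≤ n) :
    qBinom q n i = qFact q n / (qFact q i * qFact q (n - i)) := if_pos h

include hq₁ hq₂ in
lemma qBinom_zero (n : ℕ) : qBinom q n 0 = 1 := by
  rw [qBinom_eq (Nat.zero_le n)]
  simp [qFact, div_self (qFact_ne hq₁ hq₂ n)]

include hq₁ hq₂ in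
lemma qBinom_self (n : ℕ) : qBinom q n n = 1 := by
  rw [qBinom_eq le_rfl]
  simp [qFact, div_self (qFact_ne hq₁ hq₂ n)]

include hq₁ hq₂ in
lemma qPascal {m i : ℕ} (h1 : 1 ≤ i) (h2 : i ≤ m) :
    qBinom q (m+1) i = qBinom q m i * q ^ i + qBinom q m (i-1) := by
  obtain ⟨i', rfl⟩ : ∃ i', i = i' + 1 := ⟨i - 1, by omega⟩
  obtain ⟨d, rfl⟩ : ∃ d, m = (i' + 1) + d := ⟨m - (i'+1), by omega⟩
  rw [qBinom_eq (by omega), qBinom_eq (by omega), qBinom_eq (by omega)]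
  have e1 : i' + 1 + d + 1 - (i' + 1) = d + 1 := by omega
  have e2 : i' + 1 + d - (i' + 1) = d := by omega
  have e3 : i' + 1 + d - (i' + 1 - 1) = d + 1 := by omega
  have e4 : i' + 1 - 1 = i' := by omega
  rw [e1, e2, e3, e4]
  have key : qInt q (i' + 1 + d + 1) = qInt q (i'+1) + q ^ (i'+1) * qInt q (d+1) := by
    rw [show i' + 1 + d + 1 = (i' + 1) + (d + 1) by omega, qInt_add hq₂]
  rw [qFact_succ (i' + 1 + d), qFact_succ d, qFact_succ i', key]
  have n1 := qFact_ne hq₁ hq₂ i'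
  have n2 := qFact_ne hq₁ hq₂ d
  have n3 := qInt_succ_ne hq₁ hq₂ i'
  have n4 := qInt_succ_ne hq₁ hq₂ d
  have n5 := qFact_ne hq₁ hq₂ (i' + 1 + d)
  field_simp
  ring

include hq₁ hq₂ in
lemma K1 {k r s m : ℕ} (h : m + 1 ≤ r) :
    Cf q k r s (m+1) 0 = Cf q k r s m 0 * qInt q (r - (m - 0)) := by
  obtain ⟨e, he⟩ : ∃ e, r - (m+1) = e := ⟨_, rfl⟩
  unfold Cf
  rw [qBinom_zero hq₁ hq₂, qBinom_zero hq₁ hq₂]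
  rw [show m + 1 - 0 = m + 1 by omega, show m - 0 = m by omega, he,
    show r - m = e + 1 by omega]
  rw [qFact_succ e]
  have n1 := qFact_ne hq₁ hq₂ e
  have n2 := qInt_succ_ne hq₁ hq₂ e
  have n3 := qFact_ne hq₁ hq₂ s
  have n4 := qFact_ne hq₁ hq₂ r
  field_simp
  ring

include hq₁ hq₂ in
lemma K2 {k r s m : ℕ} (h : m + 1 ≤ s) :
    Cf q k r s (m+1) (m+1) =
      Cf q k r s m m * (q ^ (k + (r - (m - m))) * qInt q (s - m)) := by
  obtain ⟨f, hf⟩ : ∃ f, s - (m+1) = f := ⟨_, rfl⟩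
  unfold Cf
  rw [qBinom_self hq₁ hq₂, qBinom_self hq₁ hq₂]
  rw [show m + 1 - (m+1) = 0 by omega, show m - m = 0 by omega, hf,
    show s - m = f + 1 by omega]
  rw [qFact_succ f]
  have n1 := qFact_ne hq₁ hq₂ f
  have n2 := qInt_succ_ne hq₁ hq₂ f
  have n3 := qFact_ne hq₁ hq₂ s
  have n4 := qFact_ne hq₁ hq₂ r
  simp only [Nat.sub_zero]
  rw [show (k + r) * (m+1) = (k+r) * m + (k + r) by ring, pow_add]
  field_simp

include hq₁ hq₂ in
lemma K3 {k r s m i : ℕ} (hi1 : 1 ≤ i) (hi2 : i ≤ m) (hr : m + 1 - i ≤ r) (hs : i ≤ s) :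
    Cf q k r s (m+1) i =
      Cf q k r s m i * qInt q (r - (m - i)) +
        Cf q k r s m (i-1) * (q ^ (k + (r - (m - (i-1)))) * qInt q (s - (i-1))) := by
  obtain ⟨i', rfl⟩ : ∃ i', i = i' + 1 := ⟨i - 1, by omega⟩
  obtain ⟨d, hd⟩ : ∃ d, m - (i' + 1) = d := ⟨_, rfl⟩
  obtain ⟨e, he⟩ : ∃ e, r - (d + 1) = e := ⟨_, rfl⟩
  obtain ⟨f, hf⟩ : ∃ f, s - (i' + 1) = f := ⟨_, rfl⟩
  unfold Cf
  rw [qPascal hq₁ hq₂ hi1 (by omega)]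
  rw [show i' + 1 - 1 = i' by omega,
    show m + 1 - (i' + 1) = d + 1 by omega,
    show m - (i' + 1) = d by omega,
    show m - i' = d + 1 by omega,
    show r - (d + 1) = e by omega,
    show r - d = e + 1 by omega,
    show s - (i' + 1) = f by omega,
    show s - i' = f + 1 by omega,
    show k + r - (d + 1) = k + e by omega,
    show k + r - d = k + e + 1 by omega]
  rw [qFact_succ e, qFact_succ f]
  generalize qBinom q m (i' + 1) = b1
  generalize qBinom q m i' = b2
  have n1 := qFact_ne hq₁ hq₂ e
  have n2 := qInt_succ_ne hq₁ hq₂ e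
  have n3 := qFact_ne hq₁ hq₂ f
  have n4 := qInt_succ_ne hq₁ hq₂ f
  have n5 := qFact_ne hq₁ hq₂ s
  have n6 := qFact_ne hq₁ hq₂ r
  rw [show (k + e + 1) * (i' + 1) = (k + e) * (i' + 1) + (i' + 1) by ring, pow_add,
    show (k + e) * (i' + 1) = (k + e) * i' + (k + e) by ring, pow_add]
  field_simp
  ring
end Real
lemma pow_succ_apply {H : Type*} [NormedAddCommGroup H] [Module ℂ H]
    (T : H →L[ℂ] H) (n : ℕ) (v : H) : (T ^ (n+1)) v = T ((T ^ n) v) := by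
  rw [pow_succ', ContinuousLinearMap.mul_apply]

section Ops
variable {q : ℝ} (hq₁ : -1 < q) (hq₂ : q < 1) {H : Type*} [NormedAddCommGroup H] [InnerProductSpace ℂ H] [CompleteSpace H]
  (c cr W : H →L[ℂ] H)
  (h1 : adjoint c * c = (q : ℂ) • (c * adjoint c) + 1)
  (h4 : adjoint c * cr = cr * adjoint c + W)
  (h7 : W * cr = (q : ℂ) • (cr * W))
  (k : ℕ) (ξ : H)
  (hc : adjoint c ξ = 0)
  (hW : W ξ = ((q : ℂ) ^ k) • ξ)

include h7 hW in
lemma V1 : ∀ s : ℕ, W ((cr ^ s) ξ) = ((q:ℂ) ^ (k + s)) • (cr ^ s) ξ := by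
  intro s
  induction s with
  | zero => simpa using hW
  | succ s ih =>
    have h := DFunLike.congr_fun h7 ((cr ^ s) ξ)
    simp only [ContinuousLinearMap.mul_apply, ContinuousLinearMap.smul_apply] at h
    rw [pow_succ_apply, h, ih, map_smul, smul_smul, ← pow_succ_apply,
      show k + (s+1) = (k+s)+1 by omega, pow_succ]
    ring_nf

include hq₂ h4 h7 hc hW in
lemma V2 : ∀ s : ℕ, (adjoint c) ((cr ^ (s+1)) ξ) =
    ((qInt q (s+1) * q ^ k : ℝ) : ℂ) • (cr ^ s) ξ := by
  have hq : (1:ℝ) - q ≠ 0 := by intro h; apply absurd hq₂; simp; nlinarith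
  intro s
  induction s with
  | zero =>
    have h := DFunLike.congr_fun h4 ξ
    simp only [ContinuousLinearMap.mul_apply, add_apply] at h
    rw [pow_one, h, hc, map_zero, hW]
    have h1 : qInt q 1 = 1 := by rw [qInt]; field_simp
    rw [h1]
    push_cast
    simp
  | succ s ih =>
    have h := DFunLike.congr_fun h4 ((cr ^ (s+1)) ξ)
    simp only [ContinuousLinearMap.mul_apply, add_apply] at h
    rw [pow_succ_apply cr (s+1), h, ih, map_smul, V1 cr W h7 k ξ hW (s+1),
      ← pow_succ_apply]
    have key : ((qInt q (s+1+1) * q^k : ℝ) : ℂ)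
        = ((qInt q (s+1) * q^k : ℝ) : ℂ) + (q:ℂ)^(k+(s+1)) := by
      have : qInt q (s+1+1) = qInt q (s+1) + q^(s+1) := by
        rw [qInt, qInt]; field_simp; ring
      rw [this]
      push_cast
      ring
    rw [key, add_smul]

include hq₂ h1 in
lemma V3 : ∀ (r : ℕ) (v : H), (adjoint c) ((c ^ (r+1)) v) =
    (((q:ℝ) ^ (r+1) : ℝ) : ℂ) • (c ^ (r+1)) ((adjoint c) v)
      + ((qInt q (r+1) : ℝ) : ℂ) • (c ^ r) v := by
  have hq : (1:ℝ) - q ≠ 0 := by intro h; apply absurd hq₂; simp; nlinarith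
  have h1' : qInt q 1 = 1 := by rw [qInt]; field_simp
  intro r
  induction r with
  | zero =>
    intro v
    have h := DFunLike.congr_fun h1 v
    simp only [ContinuousLinearMap.mul_apply, add_apply, ContinuousLinearMap.smul_apply, ContinuousLinearMap.one_apply] at h
    rw [pow_one, h, h1']
    push_cast
    simp
  | succ r ih =>
    intro v
    have h := DFunLike.congr_fun h1 ((c ^ (r+1)) v)
    simp only [ContinuousLinearMap.mul_apply, add_apply, ContinuousLinearMap.smul_apply, ContinuousLinearMap.one_apply] at h
    rw [pow_succ_apply c (r+1), h, ih, map_add, map_smul, map_smul,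
      ← pow_succ_apply, ← pow_succ_apply, smul_add, smul_smul, smul_smul]
    have key : qInt q (r+1+1) = q * qInt q (r+1) + 1 := by
      rw [qInt, qInt]; field_simp; ring
    push_cast [key]
    match_scalars <;> push_cast <;> ring

include hq₂ h1 h4 h7 hc hW in
lemma OS : ∀ (r s : ℕ), (adjoint c) ((c ^ r * cr ^ s) ξ) =
    ((qInt q r : ℝ) : ℂ) • ((c ^ (r-1) * cr ^ s) ξ)
      + ((q ^ (k + r) * qInt q s : ℝ) : ℂ) • ((c ^ r * cr ^ (s-1)) ξ) := by
  have ha : ∀ s : ℕ, (adjoint c) ((cr ^ s) ξ)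
      = ((qInt q s * q ^ k : ℝ) : ℂ) • (cr ^ (s-1)) ξ := by
    intro s
    match s with
    | 0 => simp [hc, qInt]
    | s+1 => simpa using V2 hq₂ c cr W h4 h7 k ξ hc hW s
  intro r s
  match r with
  | 0 =>
    simp only [pow_zero, one_mul, mul_apply, one_apply]
    rw [ha s]
    have h0 : qInt q 0 = 0 := by simp [qInt]
    rw [h0]
    push_cast
    match_scalars <;> push_cast <;> ring
  | r+1 =>
    rw [ContinuousLinearMap.mul_apply, V3 hq₂ c h1 r ((cr ^ s) ξ), ha s, map_smul]
    rw [show r+1-1 = r by omega]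
    rw [ContinuousLinearMap.mul_apply, ContinuousLinearMap.mul_apply]
    rw [show k + (r+1) = (r+1) + k by omega]
    push_cast [pow_add]
    match_scalars <;> push_cast <;> ring

include hq₁ hq₂ h1 h4 h7 hc hW in
lemma main_aux (r s : ℕ) : ∀ m : ℕ, ((adjoint c) ^ m) ((c ^ r * cr ^ s) ξ) =
    ∑ i ∈ Finset.range (m + 1),
      if m - i ≤ r ∧ i ≤ s then
        ((Cf q k r s m i : ℝ) : ℂ) • ((c ^ (r - (m - i)) * cr ^ (s - i)) ξ)
      else 0 := by
  intro m
  induction m with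
  | zero =>
    rw [Finset.sum_range_one, if_pos ⟨Nat.zero_le r, Nat.zero_le s⟩]
    have h0 : Cf q k r s 0 0 = 1 := by
      simp [Cf, qBinom_zero hq₁ hq₂, div_self (qFact_ne hq₁ hq₂ r),
        div_self (qFact_ne hq₁ hq₂ s)]
    rw [h0]
    simp
  | succ m ih =>
    rw [pow_succ_apply, ih, map_sum]
    have step : ∀ i ∈ Finset.range (m+1),
        (adjoint c) (if m - i ≤ r ∧ i ≤ s then
            ((Cf q k r s m i : ℝ) : ℂ) • ((c ^ (r - (m - i)) * cr ^ (s - i)) ξ) else 0)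
        = (if m - i ≤ r ∧ i ≤ s then
            ((Cf q k r s m i * qInt q (r - (m - i)) : ℝ) : ℂ) •
              ((c ^ (r - (m - i) - 1) * cr ^ (s - i)) ξ) else 0)
          + (if m - i ≤ r ∧ i ≤ s then
            ((Cf q k r s m i * (q ^ (k + (r - (m - i))) * qInt q (s - i)) : ℝ) : ℂ) •
              ((c ^ (r - (m - i)) * cr ^ (s - i - 1)) ξ) else 0) := by
      intro i _
      split_ifs with hcond
      · rw [map_smul, OS hq₂ c cr W h1 h4 h7 k ξ hc hW (r - (m - i)) (s - i),
          smul_add]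
        match_scalars <;> push_cast <;> ring
      · simp
    rw [Finset.sum_congr rfl step, Finset.sum_add_distrib]
    have key : ∀ i ∈ Finset.range (m+1+1),
        (if m + 1 - i ≤ r ∧ i ≤ s then
            ((Cf q k r s (m+1) i : ℝ) : ℂ) •
              ((c ^ (r - (m + 1 - i)) * cr ^ (s - i)) ξ) else 0)
        = (if i < m+1 then (if m - i ≤ r ∧ i ≤ s then
            ((Cf q k r s m i * qInt q (r - (m - i)) : ℝ) : ℂ) •
              ((c ^ (r - (m - i) - 1) * cr ^ (s - i)) ξ) else 0) else 0)
          + (if 0 < i then (if m - (i-1) ≤ r ∧ i-1 ≤ s then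
            ((Cf q k r s m (i-1) * (q ^ (k + (r - (m - (i-1)))) * qInt q (s - (i-1))) : ℝ) : ℂ) •
              ((c ^ (r - (m - (i-1))) * cr ^ (s - (i-1) - 1)) ξ) else 0) else 0) := by
      intro i hi
      rw [Finset.mem_range] at hi
      by_cases hC : m + 1 - i ≤ r ∧ i ≤ s
      · rw [if_pos hC]
        rcases Nat.eq_zero_or_pos i with rfl | hip
        · rw [if_neg (lt_irrefl 0), add_zero, if_pos (Nat.succ_pos m),
            if_pos (⟨by omega, Nat.zero_le s⟩ : m - 0 ≤ r ∧ 0 ≤ s)]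
          rw [show r - (m + 1 - 0) = r - (m - 0) - 1 by omega]
          rw [K1 hq₁ hq₂ (by omega : m + 1 ≤ r)]
        · rcases Nat.lt_or_ge i (m+1) with him | him
          · rw [if_pos him, if_pos hip,
              if_pos (⟨by omega, by omega⟩ : m - i ≤ r ∧ i ≤ s),
              if_pos (⟨by omega, by omega⟩ : m - (i-1) ≤ r ∧ i - 1 ≤ s)]
            rw [show r - (m + 1 - i) = r - (m - i) - 1 by omega,
              show r - (m - (i-1)) = r - (m - i) - 1 by omega,
              show s - (i-1) - 1 = s - i by omega,
              K3 hq₁ hq₂ hip (by omega) hC.1 hC.2,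
              show r - (m - i) - 1 = r - (m - (i - 1)) by omega]
            push_cast
            rw [add_smul]
          · have : i = m + 1 := by omega
            subst this
            rw [if_neg (lt_irrefl (m+1)), zero_add, if_pos hip,
              show m + 1 - 1 = m by omega,
              if_pos (⟨by omega, by omega⟩ : m - m ≤ r ∧ m ≤ s)]
            rw [show r - (m + 1 - (m+1)) = r - (m - m) by omega,
              show s - (m+1) = s - m - 1 by omega,
              K2 hq₁ hq₂ (by omega : m + 1 ≤ s)]
      · rw [if_neg hC]
        have hGA : (if i < m+1 then (if m - i ≤ r ∧ i ≤ s then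
            ((Cf q k r s m i * qInt q (r - (m - i)) : ℝ) : ℂ) •
              ((c ^ (r - (m - i) - 1) * cr ^ (s - i)) ξ) else 0) else 0) = 0 := by
          split_ifs with h1' h2'
          · rw [show r - (m - i) = 0 by omega, qInt_zero, mul_zero]
            norm_num
          · rfl
          · rfl
        have hGB : (if 0 < i then (if m - (i-1) ≤ r ∧ i-1 ≤ s then
            ((Cf q k r s m (i-1) * (q ^ (k + (r - (m - (i-1)))) * qInt q (s - (i-1))) : ℝ) : ℂ) •
              ((c ^ (r - (m - (i-1))) * cr ^ (s - (i-1) - 1)) ξ) else 0) else 0) = 0 := by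
          split_ifs with h1' h2'
          · rw [show s - (i - 1) = 0 by omega, qInt_zero, mul_zero, mul_zero]
            norm_num
          · rfl
          · rfl
        rw [hGA, hGB, add_zero]
    rw [Finset.sum_congr rfl key, Finset.sum_add_distrib]
    congr 1
    · conv_rhs => rw [Finset.sum_range_succ]
      rw [if_neg (lt_irrefl (m+1)), add_zero]
      exact Finset.sum_congr rfl fun i hi => (if_pos (Finset.mem_range.mp hi)).symm
    · conv_rhs => rw [Finset.sum_range_succ']
      rw [if_neg (lt_irrefl 0), add_zero]
      refine Finset.sum_congr rfl fun i hi => ?_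
      rw [if_pos (Nat.succ_pos i)]
      simp only [Nat.add_sub_cancel]
end Ops

/-- Powers of the annihilation operators acting on the vectors `ξ_{r,s} = c^r c_r^s ξ`.
Terms whose index would be negative are interpreted as `0`. -/
theorem annihilation_pow_on_xi (q : ℝ) (hq₁ : -1 < q) (hq₂ : q < 1)
    {H : Type*} [NormedAddCommGroup H] [InnerProductSpace ℂ H] [CompleteSpace H]
    (c cr W : H →L[ℂ] H)
    (h1 : adjoint c * c = (q : ℂ) • (c * adjoint c) + 1)
    (h2 : adjoint cr * cr = (q : ℂ) • (cr * adjoint cr) + 1)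
    (h3 : c * cr = cr * c)
    (h4 : adjoint c * cr = cr * adjoint c + W)
    (h5 : adjoint cr * c = c * adjoint cr + W)
    (h6 : W * c = (q : ℂ) • (c * W))
    (h7 : W * cr = (q : ℂ) • (cr * W))
    (h8 : adjoint c * W = (q : ℂ) • (W * adjoint c))
    (h9 : adjoint cr * W = (q : ℂ) • (W * adjoint cr))
    (k : ℕ) (ξ : H) (hξ : ‖ξ‖ = 1)
    (hc : adjoint c ξ = 0) (hcr : adjoint cr ξ = 0)
    (hW : W ξ = ((q : ℂ) ^ k) • ξ) (r s m : ℕ) :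
    (((adjoint c) ^ m) ((c ^ r * cr ^ s) ξ) =
      ∑ i ∈ Finset.range (m + 1),
        if m - i ≤ r ∧ i ≤ s then
          ((qFact q r / qFact q (r - (m - i)) * (qFact q s / qFact q (s - i)) *
            qBinom q m i * q ^ ((k + r - (m - i)) * i) : ℝ) : ℂ) •
            ((c ^ (r - (m - i)) * cr ^ (s - i)) ξ)
        else 0) ∧
    (((adjoint cr) ^ m) ((c ^ r * cr ^ s) ξ) =
      ∑ i ∈ Finset.range (m + 1),
        if i ≤ r ∧ m - i ≤ s then
          ((qFact q r / qFact q (r - i) * (qFact q s / qFact q (s - (m - i))) *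
            qBinom q m i * q ^ ((k + s - (m - i)) * i) : ℝ) : ℂ) •
            ((c ^ (r - i) * cr ^ (s - (m - i))) ξ)
        else 0) := by
  have hc3 : Commute c cr := h3
  constructor
  · have := main_aux hq₁ hq₂ c cr W h1 h4 h7 k ξ hc hW r s m
    simpa only [Cf] using this
  · have hcomm : c ^ r * cr ^ s = cr ^ s * c ^ r := (hc3.pow_pow r s).eq
    rw [hcomm, main_aux hq₁ hq₂ cr c W h2 h5 h6 k ξ hcr hW s r m]
    refine Finset.sum_congr rfl fun i hi => ?_
    by_cases hcnd : i ≤ r ∧ m - i ≤ s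
    · rw [if_pos (⟨hcnd.2, hcnd.1⟩ : m - i ≤ s ∧ i ≤ r), if_pos hcnd,
        ((hc3.symm.pow_pow (s - (m - i)) (r - i)).eq)]
      congr 1
      norm_cast
      simp only [Cf]
      ring
    · rw [if_neg (fun h => hcnd ⟨h.2, h.1⟩), if_neg hcnd]
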